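/- arXiv:1902.00706 — 2 statements merged into one kernel-verified Lean document; each statement's English description precedes it below -/
import Mathlib

section
/- Let θ > 0, β > 0, and define g(x,y) = (1/(1+θy)) · exp(−θβx/(1+θy)) for x ≥ 0 and y ∈ [0,1]. Then for every k ∈ ℕ there exists C > 0 such that for all n ∈ ℕ with n ≥ 1 and all x ≥ 0, |g(x, n^{−1/2}) − Σ_{m=0}^{k} (n^{−m/2}/m!) · ∂^m g/∂y^m (x, 0)| ≤ C · n^{−(k+1)/2}. -/
open Real Finset
open Real Finset Polynomial

/-- Transfer lemma: within-derivative equals global derivative on a unique-diff subset of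
an open set where f is smooth. -/
lemma myTransfer {f : ℝ → ℝ} {U s : Set ℝ} (hU : IsOpen U)
    (hf : ContDiffOn ℝ ⊤ f U) (hs : UniqueDiffOn ℝ s) (hsU : s ⊆ U) {x : ℝ} (hx : x ∈ s)
    (m : ℕ) : iteratedDerivWithin m f s x = iteratedDeriv m f x := by
  have h1 : HasFTaylorSeriesUpToOn (m : ℕ∞) f (ftaylorSeriesWithin ℝ f U) U :=
    (hf.of_le le_top).ftaylorSeriesWithin hU.uniqueDiffOn
  have h2 := (h1.mono hsU).eq_iteratedFDerivWithin_of_uniqueDiffOn le_rfl hs hx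
  have h3 : ftaylorSeriesWithin ℝ f U x m = iteratedFDeriv ℝ m f x :=
    iteratedFDerivWithin_of_isOpen m hU (hsU hx)
  rw [iteratedDerivWithin_eq_iteratedFDerivWithin, iteratedDeriv_eq_iteratedFDeriv,
    ← h2, h3]


noncomputable def myStep (θ c : ℝ) (m : ℕ) (p : Polynomial ℝ) : Polynomial ℝ :=
  Polynomial.C (-θ) * (Polynomial.C ((m : ℝ) + 1) * p + Polynomial.X * p.derivative
    - Polynomial.C c * (Polynomial.X * p))

noncomputable def myPoly (θ c : ℝ) : ℕ → Polynomial ℝ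
  | 0 => 1
  | (m+1) => myStep θ c m (myPoly θ c m)

lemma myHasDerivAt (θ β x : ℝ) (p : Polynomial ℝ) (m : ℕ) (y : ℝ) (hy : 0 < 1 + θ * y) :
    HasDerivAt (fun y : ℝ => ((1 + θ * y)⁻¹) ^ (m + 1) * p.eval (x * (1 + θ * y)⁻¹)
        * Real.exp (-(θ * β * x) * (1 + θ * y)⁻¹))
      (((1 + θ * y)⁻¹) ^ (m + 2) * (myStep θ (θ * β) m p).eval (x * (1 + θ * y)⁻¹)
        * Real.exp (-(θ * β * x) * (1 + θ * y)⁻¹)) y := by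
  have ha : (1 + θ * y) ≠ 0 := ne_of_gt hy
  have hb : HasDerivAt (fun y : ℝ => 1 + θ * y) θ y := by
    simpa using ((hasDerivAt_id y).const_mul θ).const_add 1
  have hs : HasDerivAt (fun y : ℝ => (1 + θ * y)⁻¹) (-θ / (1 + θ * y) ^ 2) y := hb.inv ha
  have h1 : HasDerivAt (fun y : ℝ => ((1 + θ * y)⁻¹) ^ (m + 1))
      ((↑(m + 1) : ℝ) * ((1 + θ * y)⁻¹) ^ m * (-θ / (1 + θ * y) ^ 2)) y := by
    simpa using hs.fun_pow (m + 1)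
  have h2 : HasDerivAt (fun y : ℝ => p.eval (x * (1 + θ * y)⁻¹))
      (p.derivative.eval (x * (1 + θ * y)⁻¹) * (x * (-θ / (1 + θ * y) ^ 2))) y :=
    HasDerivAt.comp (h₂ := fun u => p.eval u) y (p.hasDerivAt (x * (1 + θ * y)⁻¹)) (hs.const_mul x)
  have h3 : HasDerivAt (fun y : ℝ => Real.exp (-(θ * β * x) * (1 + θ * y)⁻¹))
      (Real.exp (-(θ * β * x) * (1 + θ * y)⁻¹) * (-(θ * β * x) * (-θ / (1 + θ * y) ^ 2))) y :=
    (hs.const_mul (-(θ * β * x))).exp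
  have h := (h1.mul h2).mul h3
  refine h.congr_deriv ?_
  simp only [myStep, Polynomial.eval_mul, Polynomial.eval_add, Polynomial.eval_sub,
    Polynomial.eval_C, Polynomial.eval_X, Pi.mul_apply]
  rw [show -θ / (1 + θ * y) ^ 2 = -θ * ((1 + θ * y)⁻¹) ^ 2 by rw [div_eq_mul_inv, inv_pow]]
  push_cast
  ring

lemma myClosedForm (θ β x : ℝ) (hθ : 0 < θ) (m : ℕ) :
    ∀ y : ℝ, 0 < 1 + θ * y →
      iteratedDeriv m (fun y : ℝ => (1 + θ * y)⁻¹ * Real.exp (-(θ * β * x) / (1 + θ * y))) y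
      = ((1 + θ * y)⁻¹) ^ (m + 1) * (myPoly θ (θ * β) m).eval (x * (1 + θ * y)⁻¹)
        * Real.exp (-(θ * β * x) * (1 + θ * y)⁻¹) := by
  induction m with
  | zero =>
    intro y hy
    simp [myPoly, div_eq_mul_inv]
  | succ m IH =>
    intro y hy
    have hUopen : IsOpen {y : ℝ | 0 < 1 + θ * y} :=
      isOpen_lt continuous_const (by continuity)
    have hev : (iteratedDeriv m (fun y : ℝ => (1 + θ * y)⁻¹
          * Real.exp (-(θ * β * x) / (1 + θ * y))))
        =ᶠ[nhds y] (fun y : ℝ => ((1 + θ * y)⁻¹) ^ (m + 1)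
          * (myPoly θ (θ * β) m).eval (x * (1 + θ * y)⁻¹)
          * Real.exp (-(θ * β * x) * (1 + θ * y)⁻¹)) :=
      Filter.eventuallyEq_of_mem (hUopen.mem_nhds hy) (fun z hz => IH z hz)
    rw [iteratedDeriv_succ, hev.deriv_eq,
      (myHasDerivAt θ β x (myPoly θ (θ * β) m) m y hy).deriv]
    rfl

lemma myPolyBound (c : ℝ) (hc : 0 < c) (p : Polynomial ℝ) :
    ∃ M : ℝ, 0 ≤ M ∧ ∀ u : ℝ, 0 ≤ u → |p.eval u * Real.exp (-(c * u))| ≤ M := by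
  refine ⟨∑ i ∈ Finset.range (p.natDegree + 1), |p.coeff i| * (i.factorial / c ^ i),
    Finset.sum_nonneg fun i _ => mul_nonneg (abs_nonneg _)
      (div_nonneg (Nat.cast_nonneg _) (le_of_lt (pow_pos hc i))), ?_⟩
  intro u hu
  have hpe : |p.eval u| ≤ ∑ i ∈ Finset.range (p.natDegree + 1), |p.coeff i| * u ^ i := by
    rw [Polynomial.eval_eq_sum_range]
    refine (Finset.abs_sum_le_sum_abs _ _).trans (Finset.sum_le_sum fun i _ => ?_)
    rw [abs_mul, abs_pow, abs_of_nonneg hu]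
  have hterm : ∀ i : ℕ, u ^ i * Real.exp (-(c * u)) ≤ i.factorial / c ^ i := by
    intro i
    have h1 : (c * u) ^ i / i.factorial ≤ Real.exp (c * u) :=
      Real.pow_div_factorial_le_exp _ (by positivity) i
    have h2 : u ^ i ≤ i.factorial / c ^ i * Real.exp (c * u) := by
      rw [mul_pow] at h1
      rw [div_le_iff₀ (by positivity)] at h1
      rw [div_mul_eq_mul_div, le_div_iff₀ (by positivity)]
      nlinarith [h1]
    calc u ^ i * Real.exp (-(c * u))
        ≤ (i.factorial / c ^ i * Real.exp (c * u)) * Real.exp (-(c * u)) := by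
          exact mul_le_mul_of_nonneg_right h2 (le_of_lt (Real.exp_pos _))
      _ = i.factorial / c ^ i := by
          rw [mul_assoc, ← Real.exp_add]; simp
  calc |p.eval u * Real.exp (-(c * u))| = |p.eval u| * Real.exp (-(c * u)) := by
        rw [abs_mul, abs_of_pos (Real.exp_pos _)]
    _ ≤ (∑ i ∈ Finset.range (p.natDegree + 1), |p.coeff i| * u ^ i) * Real.exp (-(c * u)) :=
        mul_le_mul_of_nonneg_right hpe (le_of_lt (Real.exp_pos _))
    _ = ∑ i ∈ Finset.range (p.natDegree + 1), |p.coeff i| * (u ^ i * Real.exp (-(c * u))) := by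
        rw [Finset.sum_mul]; exact Finset.sum_congr rfl fun i _ => by ring
    _ ≤ _ := Finset.sum_le_sum fun i _ => mul_le_mul_of_nonneg_left (hterm i) (abs_nonneg _)

theorem uniform_expansion_exp_claims (θ β : ℝ) (hθ : 0 < θ) (hβ : 0 < β) (k : ℕ) :
    ∃ C : ℝ, 0 < C ∧ ∀ n : ℕ, 1 ≤ n → ∀ x : ℝ, 0 ≤ x →
      |(1 + θ * ((n : ℝ) ^ (-(1:ℝ)/2)))⁻¹ *
          Real.exp (-(θ * β * x) / (1 + θ * ((n : ℝ) ^ (-(1:ℝ)/2))))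
        - ∑ m ∈ Finset.range (k + 1),
            ((n : ℝ) ^ (-(m : ℝ)/2) / (Nat.factorial m)) *
              iteratedDeriv m
                (fun y : ℝ => (1 + θ * y)⁻¹ * Real.exp (-(θ * β * x) / (1 + θ * y))) 0|
        ≤ C * (n : ℝ) ^ (-((k : ℝ) + 1)/2) := by
  have hc : 0 < θ * β := mul_pos hθ hβ
  obtain ⟨M, hM0, hM⟩ := myPolyBound (θ * β) hc (myPoly θ (θ * β) (k + 1))
  refine ⟨M / (k + 1).factorial + 1, by positivity, ?_⟩
  intro n hn x hx
  have hnpos : (0:ℝ) < n := by exact_mod_cast Nat.pos_of_ne_zero (by omega)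
  have hn1 : (1:ℝ) ≤ n := by exact_mod_cast hn
  set t : ℝ := (n : ℝ) ^ (-(1:ℝ)/2) with htdef
  have ht0 : 0 < t := Real.rpow_pos_of_pos hnpos _
  have ht1 : t ≤ 1 := Real.rpow_le_one_of_one_le_of_nonpos hn1 (by norm_num)
  set f : ℝ → ℝ := fun y : ℝ => (1 + θ * y)⁻¹ * Real.exp (-(θ * β * x) / (1 + θ * y))
    with hfdef
  have hUopen : IsOpen {y : ℝ | 0 < 1 + θ * y} := isOpen_lt continuous_const (by continuity)
  have hIccU : Set.Icc 0 t ⊆ {y : ℝ | 0 < 1 + θ * y} := by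
    intro y hy
    have : 0 ≤ y := hy.1
    show 0 < 1 + θ * y
    nlinarith
  have hsmooth : ContDiffOn ℝ ⊤ f {y : ℝ | 0 < 1 + θ * y} := by
    intro y hy
    have hy' : (1 + θ * y) ≠ 0 := ne_of_gt hy
    have hb : ContDiffAt ℝ ⊤ (fun y : ℝ => 1 + θ * y) y :=
      (contDiff_const.add (contDiff_const.mul contDiff_id)).contDiffAt
    have hinv := hb.inv hy'
    have hexp : ContDiffAt ℝ ⊤ (fun y : ℝ => Real.exp (-(θ * β * x) / (1 + θ * y))) y :=
      (contDiffAt_const.div hb hy').exp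
    exact (hinv.mul hexp).contDiffWithinAt
  have hUD : UniqueDiffOn ℝ (Set.Icc (0:ℝ) t) := uniqueDiffOn_Icc ht0
  have htrans : ∀ z ∈ Set.Icc (0:ℝ) t, ∀ m : ℕ,
      iteratedDerivWithin m f (Set.Icc 0 t) z = iteratedDeriv m f z :=
    fun z hz m => myTransfer hUopen hsmooth hUD hIccU hz m
  have hcont : ContDiffOn ℝ (k : ℕ∞) f (Set.Icc 0 t) := (hsmooth.of_le le_top).mono hIccU
  have hdiff : DifferentiableOn ℝ (iteratedDerivWithin k f (Set.Icc 0 t)) (Set.Ioo 0 t) := by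
    intro y hy
    have hyU : 0 < 1 + θ * y := hIccU (Set.Ioo_subset_Icc_self hy)
    have hev : (iteratedDeriv k f) =ᶠ[nhds y]
        (fun y : ℝ => ((1 + θ * y)⁻¹) ^ (k + 1)
          * (myPoly θ (θ * β) k).eval (x * (1 + θ * y)⁻¹)
          * Real.exp (-(θ * β * x) * (1 + θ * y)⁻¹)) :=
      Filter.eventuallyEq_of_mem (hUopen.mem_nhds hyU)
        (fun z hz => myClosedForm θ β x hθ k z hz)
    have hDA : DifferentiableAt ℝ (iteratedDeriv k f) y := by
      rw [Filter.EventuallyEq.differentiableAt_iff hev]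
      exact (myHasDerivAt θ β x (myPoly θ (θ * β) k) k y hyU).differentiableAt
    exact (hDA.differentiableWithinAt.congr
      (fun z hz => htrans z (Set.Ioo_subset_Icc_self hz) k)
      (htrans y (Set.Ioo_subset_Icc_self hy) k))
  rw [← Set.uIcc_of_le ht0.le] at hcont hdiff
  rw [← Set.uIoo_of_le ht0.le] at hdiff
  obtain ⟨y', hy', hrem⟩ := taylor_mean_remainder_lagrange ht0.ne hcont hdiff
  rw [Set.uIcc_of_le ht0.le] at hrem
  rw [Set.uIoo_of_le ht0.le] at hy'
  -- rewrite the Taylor polynomial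
  have hpow : ∀ m : ℕ, t ^ m = (n : ℝ) ^ (-(m : ℝ)/2) := by
    intro m
    rw [htdef, ← Real.rpow_natCast ((n:ℝ) ^ (-(1:ℝ)/2)) m, ← Real.rpow_mul (le_of_lt hnpos)]
    congr 1
    ring
  have hsum : taylorWithinEval f k (Set.Icc 0 t) 0 t
      = ∑ m ∈ Finset.range (k + 1),
          ((n : ℝ) ^ (-(m : ℝ)/2) / (Nat.factorial m)) * iteratedDeriv m f 0 := by
    rw [taylor_within_apply]
    refine Finset.sum_congr rfl fun m _ => ?_
    rw [htrans 0 (Set.left_mem_Icc.mpr (le_of_lt ht0)) m, sub_zero, hpow m, smul_eq_mul]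
    ring
  -- bound the remainder derivative
  have hy'U : 0 < 1 + θ * y' := hIccU (Set.Ioo_subset_Icc_self hy')
  have hDbound : |iteratedDerivWithin (k + 1) f (Set.Icc 0 t) y'| ≤ M := by
    rw [htrans y' (Set.Ioo_subset_Icc_self hy') (k + 1),
      myClosedForm θ β x hθ (k + 1) y' hy'U]
    have hs0 : 0 < (1 + θ * y')⁻¹ := inv_pos.mpr hy'U
    have hs1 : (1 + θ * y')⁻¹ ≤ 1 := by
      rw [inv_le_one_iff₀]
      right
      nlinarith [hy'.1, hθ.le]
    have hu : 0 ≤ x * (1 + θ * y')⁻¹ := mul_nonneg hx hs0.le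
    have hexpeq : -(θ * β * x) * (1 + θ * y')⁻¹ = -(θ * β * (x * (1 + θ * y')⁻¹)) := by ring
    rw [mul_assoc, abs_mul, hexpeq]
    calc |((1 + θ * y')⁻¹) ^ (k + 1 + 1)|
          * |(myPoly θ (θ * β) (k + 1)).eval (x * (1 + θ * y')⁻¹)
            * Real.exp (-(θ * β * (x * (1 + θ * y')⁻¹)))|
        ≤ 1 * M := by
          apply mul_le_mul _ (hM _ hu) (abs_nonneg _) zero_le_one
          rw [abs_pow, abs_of_pos hs0]
          exact pow_le_one₀ hs0.le hs1
      _ = M := one_mul M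
  -- conclude
  have hft : (1 + θ * t)⁻¹ * Real.exp (-(θ * β * x) / (1 + θ * t)) = f t := rfl
  rw [hft, ← hsum, hrem, sub_zero]
  have htk : t ^ (k + 1) = (n : ℝ) ^ (-((k : ℝ) + 1)/2) := by
    rw [hpow (k + 1)]
    congr 1
    push_cast
    ring
  rw [abs_div, abs_mul, abs_pow, abs_of_pos ht0, Nat.abs_cast]
  have h1 : |iteratedDerivWithin (k + 1) f (Set.Icc 0 t) y'| * t ^ (k + 1)
      / ((k + 1).factorial : ℝ)
      ≤ M * t ^ (k + 1) / ((k + 1).factorial : ℝ) := by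
    gcongr
  refine h1.trans ?_
  rw [← htk]
  have h2 : M * t ^ (k + 1) / ((k + 1).factorial : ℝ)
      = (M / ((k + 1).factorial : ℝ)) * t ^ (k + 1) := by ring
  rw [h2]
  apply mul_le_mul_of_nonneg_right _ (pow_nonneg ht0.le _)
  have : (0:ℝ) < ((k + 1).factorial : ℝ) := by positivity
  linarith [div_nonneg hM0 this.le]
end

section
/- Let θ > 0, β > 0. Define for x > 0 the function E(x) = e^{−(2/3)θβx}(1 + (8θ/(9√n))((2/3)θβx − 1)) and ψₙ as the exact ruin probability with Gamma(2, √nβ) claims. Then lim_{n→∞} √n(ψₙ(0) − e^{0}) = −θ, while the limit as x → 0⁺ of lim_{n→∞} √n(ψₙ(x) − e^{−(2/3)θβx}) equals −(8/9)θ; in particular −θ ≠ −(8/9)θ, so the first-order coefficient is discontinuous at x = 0. -/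
open Real Filter

noncomputable def Rg (θ β : ℝ) (n : ℕ) : ℝ :=
  (Real.sqrt n * β / (4 * (1 + θ / Real.sqrt n))) *
    ((3 + 4 * θ / Real.sqrt n) - Real.sqrt (9 + 8 * θ / Real.sqrt n))

noncomputable def rg (θ β : ℝ) (n : ℕ) : ℝ :=
  (Real.sqrt n * β / (4 * (1 + θ / Real.sqrt n))) *
    ((3 + 4 * θ / Real.sqrt n) + Real.sqrt (9 + 8 * θ / Real.sqrt n))

noncomputable def psiGamma (θ β : ℝ) (n : ℕ) (x : ℝ) : ℝ :=
  θ / (2 * (1 + θ / Real.sqrt n)) *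
    ((2 * β - Rg θ β n / Real.sqrt n) /
        (2 * θ * β - (3 + 4 * θ / Real.sqrt n) / 2 * Rg θ β n) * Real.exp (-(Rg θ β n) * x)
      + (2 * β - rg θ β n / Real.sqrt n) /
        (2 * θ * β - (3 + 4 * θ / Real.sqrt n) / 2 * rg θ β n) * Real.exp (-(rg θ β n) * x))

noncomputable def Sq (u : ℝ) : ℝ := Real.sqrt (9 + 8 * u)
noncomputable def Pc (u : ℝ) : ℝ := (3 + 2 * u + Sq u) / (2 * (1 + u) * Sq u)
noncomputable def Qc (u : ℝ) : ℝ :=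
  -(u * (5 + 4 * u - Sq u)) / ((1 + u) * Sq u * (Sq u + 3 + 4 * u))
noncomputable def Rc (θ β u : ℝ) : ℝ := 4 * θ * β / (3 + 4 * u + Sq u)
noncomputable def rcc (θ β u : ℝ) : ℝ := θ * β * (3 + 4 * u + Sq u) / (4 * u * (1 + u))

lemma psi_eq (θ β : ℝ) (hθ : 0 < θ) (hβ : 0 < β) (n : ℕ) (hn : 1 ≤ n) (x : ℝ) :
    psiGamma θ β n x =
      Pc (θ / Real.sqrt n) * Real.exp (-(Rc θ β (θ / Real.sqrt n)) * x)
        + Qc (θ / Real.sqrt n) * Real.exp (-(rcc θ β (θ / Real.sqrt n)) * x) := by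
  have hn0 : (0:ℝ) < n := by exact_mod_cast hn
  have hs0 : 0 < Real.sqrt n := Real.sqrt_pos.mpr hn0
  unfold psiGamma Rg rg Pc Qc Rc rcc Sq
  rw [show (9:ℝ) + 8 * θ / Real.sqrt n = 9 + 8 * (θ / Real.sqrt n) from by ring,
      show (3:ℝ) + 4 * θ / Real.sqrt n = 3 + 4 * (θ / Real.sqrt n) from by ring]
  set s := Real.sqrt n with hs'
  set u := θ / s with hu'
  have hu : 0 < u := div_pos hθ hs0
  have hsu : s * u = θ := by rw [hu']; field_simp
  set S := Real.sqrt (9 + 8 * u) with hS'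
  have hSpos : 0 < S := Real.sqrt_pos.mpr (by linarith)
  have hS2 : S ^ 2 = 9 + 8 * u := Real.sq_sqrt (by linarith)
  have h1u : (0:ℝ) < 1 + u := by linarith
  have hD : (0:ℝ) < 3 + 4 * u + S := by linarith
  clear hu' hS' hn0
  clear_value S u s
  have hRg : s * β / (4 * (1 + u)) * ((3 + 4 * u) - S) = 4 * θ * β / (3 + 4 * u + S) := by
    field_simp
    linear_combination 16*(1+u)*hsu - s*hS2
  have hrg : s * β / (4 * (1 + u)) * ((3 + 4 * u) + S) = θ * β * (3 + 4 * u + S) / (4 * u * (1 + u)) := by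
    field_simp
    linear_combination hsu
  rw [hRg, hrg]
  have hden1 : 2*θ*β - (3 + 4*u)/2 * (4*θ*β/(3 + 4*u + S)) = 2*θ*β*S/(3 + 4*u + S) := by
    field_simp
    ring
  have hnum1 : 2*β - 4*θ*β/(3 + 4*u + S)/s = 2*β*(3 + 2*u + S)/(3 + 4*u + S) := by
    field_simp
    linear_combination 4*hsu
  have hden2 : 2*θ*β - (3 + 4*u)/2 * (θ*β*(3 + 4*u + S)/(4*u*(1 + u)))
      = -(θ*β*S*(S + 3 + 4*u))/(8*u*(1 + u)) := by
    field_simp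
    linear_combination 8*hS2
  have hnum2 : 2*β - θ*β*(3 + 4*u + S)/(4*u*(1 + u))/s = β*(5 + 4*u - S)/(4*(1 + u)) := by
    field_simp
    linear_combination (3+4*u+S)*hsu
  rw [hden1, hnum1, hden2, hnum2]
  have hA : θ / (2*(1 + u)) * (2*β*(3 + 2*u + S)/(3 + 4*u + S) / (2*θ*β*S/(3 + 4*u + S)))
      = (3 + 2*u + S) / (2*(1 + u)*S) := by
    field_simp
  have hB : θ / (2*(1 + u)) * (β*(5 + 4*u - S)/(4*(1 + u)) / (-(θ*β*S*(S + 3 + 4*u))/(8*u*(1 + u))))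
      = -(u*(5 + 4*u - S)) / ((1 + u)*S*(S + 3 + 4*u)) := by
    rw [div_div_eq_mul_div, div_neg, mul_div_assoc]
    field_simp
    ring
  linear_combination Real.exp (-(4*θ*β/(3 + 4*u + S))*x) * hA
    + Real.exp (-(θ*β*(3 + 4*u + S)/(4*u*(1 + u)))*x) * hB

lemma Sq_zero : Sq 0 = 3 := by
  have : (9:ℝ) + 8 * 0 = 3 ^ 2 := by norm_num
  rw [Sq, this, Real.sqrt_sq (by norm_num : (0:ℝ) ≤ 3)]

lemma hasDeriv_Sq : HasDerivAt Sq (4/3) 0 := by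
  have h : HasDerivAt (fun u : ℝ => 9 + 8 * u) 8 0 := by
    simpa using ((hasDerivAt_id (0:ℝ)).const_mul 8).const_add 9
  have h2 := (Real.hasDerivAt_sqrt (by norm_num : (9:ℝ) + 8 * 0 ≠ 0)).comp 0 h
  have e : Real.sqrt (9 + 8 * 0) = 3 := by
    rw [show (9:ℝ) + 8 * 0 = 3 ^ 2 by norm_num, Real.sqrt_sq (by norm_num : (0:ℝ) ≤ 3)]
  refine h2.congr_deriv ?_
  rw [e]; norm_num

lemma hasDeriv_Pc : HasDerivAt Pc (-(8/9)) 0 := by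
  have h1 : HasDerivAt (fun u : ℝ => 3 + 2 * u) 2 0 := by
    simpa using ((hasDerivAt_id (0:ℝ)).const_mul 2).const_add 3
  have hnum : HasDerivAt (fun u : ℝ => 3 + 2 * u + Sq u) (2 + 4/3) 0 := h1.add hasDeriv_Sq
  have h2 : HasDerivAt (fun u : ℝ => 2 * (1 + u)) 2 0 := by
    simpa using ((hasDerivAt_id (0:ℝ)).const_add 1).const_mul 2
  have hden : HasDerivAt (fun u : ℝ => 2 * (1 + u) * Sq u) (2 * Sq 0 + 2 * (1 + 0) * (4/3)) 0 :=
    h2.mul hasDeriv_Sq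
  have hne : 2 * (1 + (0:ℝ)) * Sq 0 ≠ 0 := by rw [Sq_zero]; norm_num
  have := hnum.div hden hne
  refine this.congr_deriv ?_
  rw [Sq_zero]; norm_num

lemma Pc_zero : Pc 0 = 1 := by rw [Pc, Sq_zero]; norm_num
lemma Qc_zero : Qc 0 = 0 := by rw [Qc]; norm_num

lemma hasDeriv_Qc : HasDerivAt Qc (-(1/9)) 0 := by
  have h1 : HasDerivAt (fun u : ℝ => 5 + 4 * u) 4 0 := by
    simpa using ((hasDerivAt_id (0:ℝ)).const_mul 4).const_add 5
  have hg : HasDerivAt (fun u : ℝ => 5 + 4 * u - Sq u) (4 - 4/3) 0 := h1.sub hasDeriv_Sq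
  have hnum : HasDerivAt (fun u : ℝ => -(u * (5 + 4 * u - Sq u)))
      (-(1 * (5 + 4 * 0 - Sq 0) + 0 * (4 - 4/3))) 0 := ((hasDerivAt_id (0:ℝ)).mul hg).neg
  have h3 : HasDerivAt (fun u : ℝ => 1 + u) 1 0 := by
    simpa using (hasDerivAt_id (0:ℝ)).const_add 1
  have h4 : HasDerivAt (fun u : ℝ => (1 + u) * Sq u) (1 * Sq 0 + (1 + 0) * (4/3)) 0 :=
    h3.mul hasDeriv_Sq
  have h5 : HasDerivAt (fun u : ℝ => Sq u + 3 + 4 * u) (4/3 + 4) 0 := by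
    have h6 : HasDerivAt (fun u : ℝ => 4 * u) 4 0 := by
      simpa using (hasDerivAt_id (0:ℝ)).const_mul 4
    exact (hasDeriv_Sq.add_const 3).add h6
  have hden : HasDerivAt (fun u : ℝ => (1 + u) * Sq u * (Sq u + 3 + 4 * u))
      ((1 * Sq 0 + (1 + 0) * (4/3)) * (Sq 0 + 3 + 4 * 0) + (1 + 0) * Sq 0 * (4/3 + 4)) 0 :=
    h4.mul h5
  have hne : (1 + (0:ℝ)) * Sq 0 * (Sq 0 + 3 + 4 * 0) ≠ 0 := by rw [Sq_zero]; norm_num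
  have := hnum.div hden hne
  refine this.congr_deriv ?_
  rw [Sq_zero]; norm_num

lemma Rc_zero (θ β : ℝ) : Rc θ β 0 = 2/3 * θ * β := by rw [Rc, Sq_zero]; ring

lemma hasDeriv_Rc (θ β : ℝ) : HasDerivAt (Rc θ β) (-(16 * θ * β / 27)) 0 := by
  have h5 : HasDerivAt (fun u : ℝ => 3 + 4 * u + Sq u) (4 + 4/3) 0 := by
    have h1 : HasDerivAt (fun u : ℝ => 3 + 4 * u) 4 0 := by
      simpa using ((hasDerivAt_id (0:ℝ)).const_mul 4).const_add 3
    exact h1.add hasDeriv_Sq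
  have hne : 3 + 4 * (0:ℝ) + Sq 0 ≠ 0 := by rw [Sq_zero]; norm_num
  have := (hasDerivAt_const (0:ℝ) (4 * θ * β)).div h5 hne
  refine this.congr_deriv ?_
  rw [Sq_zero]; ring

lemma slope_tendsto {f : ℝ → ℝ} {d : ℝ} (hf : HasDerivAt f d 0) :
    Tendsto (fun u => (f u - f 0) / u) (nhdsWithin 0 (Set.Ioi 0)) (nhds d) := by
  have h := hasDerivAt_iff_tendsto_slope.mp hf
  have h2 : Tendsto (slope f 0) (nhdsWithin 0 (Set.Ioi 0)) (nhds d) :=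
    h.mono_left (nhdsWithin_mono 0 (fun x hx => ne_of_gt hx))
  refine h2.congr (fun u => ?_)
  rw [slope_def_field]; ring_nf

lemma tendsto_u (θ : ℝ) (hθ : 0 < θ) :
    Tendsto (fun n : ℕ => θ / Real.sqrt n) atTop (nhdsWithin 0 (Set.Ioi 0)) := by
  rw [tendsto_nhdsWithin_iff]
  constructor
  · have h1 : Tendsto (fun x : ℝ => x ^ (1/2:ℝ)) atTop atTop := tendsto_rpow_atTop (by norm_num)
    have hs : Tendsto (fun n : ℕ => Real.sqrt n) atTop atTop := by
      refine (h1.comp tendsto_natCast_atTop_atTop).congr fun n => ?_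
      exact (Real.sqrt_eq_rpow _).symm
    have h2 := hs.inv_tendsto_atTop.const_mul θ
    simpa [div_eq_mul_inv] using h2
  · filter_upwards [eventually_ge_atTop 1] with n hn
    have : (0:ℝ) < Real.sqrt n := Real.sqrt_pos.mpr (by exact_mod_cast hn)
    exact div_pos hθ this

lemma lim_x0 (θ β : ℝ) (hθ : 0 < θ) (hβ : 0 < β) :
    Tendsto (fun u : ℝ => θ / u * (Pc u + Qc u - 1)) (nhdsWithin 0 (Set.Ioi 0)) (nhds (-θ)) := by
  have hf : HasDerivAt (fun u => Pc u + Qc u) (-1 : ℝ) 0 := by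
    have := hasDeriv_Pc.add hasDeriv_Qc
    refine this.congr_deriv ?_; norm_num
  have h := (slope_tendsto hf).const_mul θ
  beta_reduce at h
  rw [show θ * (-1 : ℝ) = -θ by ring] at h
  refine h.congr fun u => ?_
  rw [Pc_zero, Qc_zero]
  ring

lemma lim_rest (θ β x : ℝ) (hθ : 0 < θ) (hβ : 0 < β) (hx : 0 < x) :
    Tendsto (fun u : ℝ => θ / u * (Qc u * Real.exp (-(rcc θ β u) * x)))
      (nhdsWithin 0 (Set.Ioi 0)) (nhds 0) := by
  have hQ : Tendsto (fun u : ℝ => θ * (Qc u / u)) (nhdsWithin 0 (Set.Ioi 0))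
      (nhds (θ * (-(1/9)))) := by
    have h := (slope_tendsto hasDeriv_Qc).const_mul θ
    beta_reduce at h
    rw [Qc_zero] at h
    refine h.congr fun u => ?_
    ring
  have hSc : Continuous Sq := Real.continuous_sqrt.comp (by continuity)
  have hnum : Tendsto (fun u : ℝ => θ * β * (3 + 4 * u + Sq u) / (4 * (1 + u)))
      (nhdsWithin 0 (Set.Ioi 0)) (nhds (θ * β * (3 + 4 * 0 + Sq 0) / (4 * (1 + 0)))) := by
    apply Tendsto.mono_left _ nhdsWithin_le_nhds
    apply ContinuousAt.tendsto
    apply ContinuousAt.div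
    · exact (continuousAt_const.mul (((continuousAt_const.mul continuousAt_id).const_add 3).add
        hSc.continuousAt))
    · exact continuousAt_const.mul (continuousAt_id.const_add 1)
    · norm_num
  have hC : 0 < θ * β * (3 + 4 * 0 + Sq 0) / (4 * (1 + 0)) := by
    rw [Sq_zero]; positivity
  have hinv : Tendsto (fun u : ℝ => u⁻¹) (nhdsWithin 0 (Set.Ioi 0)) atTop :=
    tendsto_inv_nhdsGT_zero
  have hrc : Tendsto (fun u : ℝ => rcc θ β u) (nhdsWithin 0 (Set.Ioi 0)) atTop := by
    refine (Filter.Tendsto.pos_mul_atTop hC hnum hinv).congr' ?_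
    filter_upwards [self_mem_nhdsWithin] with u hu
    have hu0 : u ≠ 0 := ne_of_gt hu
    rw [rcc]
    field_simp
  have h1 : Tendsto (fun u : ℝ => rcc θ β u * x) (nhdsWithin 0 (Set.Ioi 0)) atTop :=
    hrc.atTop_mul_const hx
  have h2 : Tendsto (fun u : ℝ => -(rcc θ β u * x)) (nhdsWithin 0 (Set.Ioi 0)) atBot :=
    tendsto_neg_atTop_atBot.comp h1
  have h3 : Tendsto (fun u : ℝ => Real.exp (-(rcc θ β u) * x)) (nhdsWithin 0 (Set.Ioi 0))
      (nhds 0) := by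
    refine (Real.tendsto_exp_atBot.comp h2).congr fun u => ?_
    simp [neg_mul]
  have h4 := hQ.mul h3
  rw [mul_zero] at h4
  exact h4.congr fun u => by ring

lemma lim_main (θ β x : ℝ) (hθ : 0 < θ) (hβ : 0 < β) :
    Tendsto (fun u : ℝ => θ / u * (Pc u * Real.exp (-(Rc θ β u) * x)
        - Real.exp (-(2/3*θ*β) * x)))
      (nhdsWithin 0 (Set.Ioi 0))
      (nhds (8 * θ / 9 * (2/3*θ*β*x - 1) * Real.exp (-(2/3*θ*β) * x))) := by
  have hinner : HasDerivAt (fun u => -(Rc θ β u) * x) (-(-(16 * θ * β / 27)) * x) 0 :=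
    ((hasDeriv_Rc θ β).neg).mul_const x
  have hexp : HasDerivAt (fun u => Real.exp (-(Rc θ β u) * x))
      (Real.exp (-(Rc θ β 0) * x) * (-(-(16 * θ * β / 27)) * x)) 0 := hinner.exp
  have hg := hasDeriv_Pc.mul hexp
  have h := (slope_tendsto hg).const_mul θ
  beta_reduce at h
  rw [Pc_zero, Rc_zero] at h
  have hval : θ * (-(8/9) * Real.exp (-(2/3*θ*β) * x)
      + 1 * (Real.exp (-(2/3*θ*β) * x) * (-(-(16 * θ * β / 27)) * x)))
      = 8 * θ / 9 * (2/3*θ*β*x - 1) * Real.exp (-(2/3*θ*β) * x) := by ring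
  rw [hval] at h
  refine h.congr fun u => ?_
  simp only [Pi.mul_apply, Pc_zero, Rc_zero]
  ring

theorem first_order_coeff_discontinuous (θ β : ℝ) (hθ : 0 < θ) (hβ : 0 < β) :
    Tendsto (fun n : ℕ => Real.sqrt n * (psiGamma θ β n 0 - Real.exp 0))
      atTop (nhds (-θ)) ∧
    (∀ x : ℝ, 0 < x →
      Tendsto (fun n : ℕ =>
          Real.sqrt n * (psiGamma θ β n x - Real.exp (-(2 / 3 * θ * β) * x)))
        atTop
        (nhds (8 * θ / 9 * (2 / 3 * θ * β * x - 1) * Real.exp (-(2 / 3 * θ * β) * x)))) ∧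
    Tendsto (fun x : ℝ => 8 * θ / 9 * (2 / 3 * θ * β * x - 1) * Real.exp (-(2 / 3 * θ * β) * x))
      (nhdsWithin 0 (Set.Ioi 0)) (nhds (-(8 / 9 * θ))) ∧
    -θ ≠ -(8 / 9 * θ) := by
  refine ⟨?_, ?_, ?_, ?_⟩
  · have key := (lim_x0 θ β hθ hβ).comp (tendsto_u θ hθ)
    refine key.congr' ?_
    filter_upwards [eventually_ge_atTop 1] with n hn
    have hs0 : (0:ℝ) < Real.sqrt n := Real.sqrt_pos.mpr (by exact_mod_cast hn)
    have hst : θ / (θ / Real.sqrt n) = Real.sqrt n := by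
      field_simp
    show θ / (θ / Real.sqrt n) * (Pc (θ / Real.sqrt n) + Qc (θ / Real.sqrt n) - 1)
      = Real.sqrt n * (psiGamma θ β n 0 - Real.exp 0)
    rw [psi_eq θ β hθ hβ n hn 0, hst]
    simp [Real.exp_zero]
  · intro x hx
    have hsum := (lim_main θ β x hθ hβ).add (lim_rest θ β x hθ hβ hx)
    rw [add_zero] at hsum
    have key := hsum.comp (tendsto_u θ hθ)
    refine key.congr' ?_
    filter_upwards [eventually_ge_atTop 1] with n hn
    have hs0 : (0:ℝ) < Real.sqrt n := Real.sqrt_pos.mpr (by exact_mod_cast hn)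
    have hst : θ / (θ / Real.sqrt n) = Real.sqrt n := by
      field_simp
    show θ / (θ / Real.sqrt n) * (Pc (θ / Real.sqrt n)
          * Real.exp (-(Rc θ β (θ / Real.sqrt n)) * x) - Real.exp (-(2 / 3 * θ * β) * x))
        + θ / (θ / Real.sqrt n) * (Qc (θ / Real.sqrt n)
          * Real.exp (-(rcc θ β (θ / Real.sqrt n)) * x))
      = Real.sqrt n * (psiGamma θ β n x - Real.exp (-(2 / 3 * θ * β) * x))
    rw [psi_eq θ β hθ hβ n hn x, hst]
    ring
  · have hc : Continuous (fun x : ℝ =>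
        8 * θ / 9 * (2 / 3 * θ * β * x - 1) * Real.exp (-(2 / 3 * θ * β) * x)) := by
      continuity
    have h : Tendsto (fun x : ℝ =>
        8 * θ / 9 * (2 / 3 * θ * β * x - 1) * Real.exp (-(2 / 3 * θ * β) * x))
        (nhdsWithin 0 (Set.Ioi 0))
        (nhds (8 * θ / 9 * (2 / 3 * θ * β * 0 - 1) * Real.exp (-(2 / 3 * θ * β) * 0))) :=
      (hc.continuousAt (x := 0)).tendsto.mono_left nhdsWithin_le_nhds
    convert h using 2
    norm_num
    ring
  · intro h
    have : θ = 8 / 9 * θ := by linarith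
    linarith
end
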